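/- NP-hardness gadget soundness (clause sub-graph): Consider the sub-graph for a 3-SAT clause c over variables x₁,…,xₙ built as in Construction 1, with entry node s_prev, exit node s_next, one node per variable with an incoming edge from s_prev and an outgoing edge to s_next, plus intermediate nodes I_T, I_F bypassing respectively the outgoing edge of each positive literal variable and the incoming edge of each negated literal variable. Given a Boolean assignment, cut the incoming edge of x_i if x_i is false and its outgoing edge if x_i is true. Then there exists a path from s_prev to s_next in the cut sub-graph if and only if the assignment satisfies the clause, and every surviving path passes through I_T or I_F. -/
import Mathlib


/-- Vertices of the clause gadget: entry `sprev`, exit `snext`, one node per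
variable, and the intermediate nodes `iT`, `iF`. -/
inductive GV (n : ℕ) : Type
  | sprev : GV n
  | snext : GV n
  | var : Fin n → GV n
  | iT : GV n
  | iF : GV n
  deriving DecidableEq

/-- Edges of the clause gadget after applying the assignment-induced cuts:
the through edge `(sprev, var i)` survives iff `σ i = true` (it is cut when
`x_i` is false), the through edge `(var i, snext)` survives iff `σ i = false`
(cut when `x_i` is true); for each positive literal `x_i` of the clause `c`
there are edges `(var i, iT)` and `(iT, snext)`, and for each negative literal
`¬x_i` there are edges `(sprev, iF)` and `(iF, var i)` (literal edges are never
cut). -/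
def gadgetEdge {n : ℕ} (c : Finset (Fin n × Bool)) (σ : Fin n → Bool) :
    GV n → GV n → Prop
  | .sprev, .var i => σ i = true
  | .var i, .snext => σ i = false
  | .var i, .iT => (i, true) ∈ c
  | .iT, .snext => ∃ i, (i, true) ∈ c
  | .sprev, .iF => ∃ i, (i, false) ∈ c
  | .iF, .var i => (i, false) ∈ c
  | _, _ => False

lemma gadget_aux {n : ℕ} (c : Finset (Fin n × Bool)) (σ : Fin n → Bool)
    (k : ℕ) (p : ℕ → GV n) (h0 : p 0 = GV.sprev) (hk : p k = GV.snext)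
    (he : ∀ i < k, gadgetEdge c σ (p i) (p (i + 1))) :
    (∃ l ∈ c, σ l.1 = l.2) ∧ (∃ i ≤ k, p i = GV.iT ∨ p i = GV.iF) := by
  have hk0 : k ≠ 0 := by rintro rfl; rw [h0] at hk; exact absurd hk (by simp)
  have h1 := he 0 (Nat.pos_of_ne_zero hk0)
  rw [h0] at h1
  cases hp1 : p 1 with
  | sprev => rw [hp1] at h1; exact absurd h1 (by simp [gadgetEdge])
  | snext => rw [hp1] at h1; exact absurd h1 (by simp [gadgetEdge])
  | iT => rw [hp1] at h1; exact absurd h1 (by simp [gadgetEdge])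
  | var i =>
    rw [hp1] at h1
    have hσ : σ i = true := h1
    have hk1 : k ≠ 1 := by rintro rfl; rw [hp1] at hk; exact absurd hk (by simp)
    have h2 := he 1 (by omega)
    rw [hp1] at h2
    cases hp2 : p 2 with
    | sprev => rw [hp2] at h2; exact absurd h2 (by simp [gadgetEdge])
    | var j => rw [hp2] at h2; exact absurd h2 (by simp [gadgetEdge])
    | iF => rw [hp2] at h2; exact absurd h2 (by simp [gadgetEdge])
    | snext =>
      rw [hp2] at h2
      have : σ i = false := h2
      simp [hσ] at this
    | iT =>
      rw [hp2] at h2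
      have hc : (i, true) ∈ c := h2
      exact ⟨⟨(i, true), hc, hσ⟩, ⟨2, by omega, Or.inl hp2⟩⟩
  | iF =>
    have hk1 : k ≠ 1 := by rintro rfl; rw [hp1] at hk; exact absurd hk (by simp)
    have h2 := he 1 (by omega)
    rw [hp1] at h2
    cases hp2 : p 2 with
    | sprev => rw [hp2] at h2; exact absurd h2 (by simp [gadgetEdge])
    | snext => rw [hp2] at h2; exact absurd h2 (by simp [gadgetEdge])
    | iT => rw [hp2] at h2; exact absurd h2 (by simp [gadgetEdge])
    | iF => rw [hp2] at h2; exact absurd h2 (by simp [gadgetEdge])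
    | var i =>
      rw [hp2] at h2
      have hc : (i, false) ∈ c := h2
      have hk2 : k ≠ 2 := by rintro rfl; rw [hp2] at hk; exact absurd hk (by simp)
      have h3 := he 2 (by omega)
      rw [hp2] at h3
      refine ⟨?_, ⟨1, by omega, Or.inr hp1⟩⟩
      cases hp3 : p 3 with
      | sprev => rw [hp3] at h3; exact absurd h3 (by simp [gadgetEdge])
      | var j => rw [hp3] at h3; exact absurd h3 (by simp [gadgetEdge])
      | iF => rw [hp3] at h3; exact absurd h3 (by simp [gadgetEdge])
      | snext =>
        rw [hp3] at h3
        exact ⟨(i, false), hc, h3⟩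
      | iT =>
        rw [hp3] at h3
        have hcT : (i, true) ∈ c := h3
        cases hσ : σ i with
        | true => exact ⟨(i, true), hcT, hσ⟩
        | false => exact ⟨(i, false), hc, hσ⟩

/-- clause gadget soundness: there exists a path from `sprev` to
`snext` in the cut gadget iff the assignment `σ` satisfies the clause `c`, and
every surviving such path passes through `iT` or `iF`. -/
theorem stmt_8 (n : ℕ) (c : Finset (Fin n × Bool)) (σ : Fin n → Bool) :
    ((∃ (k : ℕ) (p : ℕ → GV n), p 0 = GV.sprev ∧ p k = GV.snext ∧
        ∀ i < k, gadgetEdge c σ (p i) (p (i + 1))) ↔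
      ∃ l ∈ c, σ l.1 = l.2) ∧
    (∀ (k : ℕ) (p : ℕ → GV n), p 0 = GV.sprev → p k = GV.snext →
      (∀ i < k, gadgetEdge c σ (p i) (p (i + 1))) →
      ∃ i ≤ k, p i = GV.iT ∨ p i = GV.iF) := by
  have main := gadget_aux c σ
  constructor
  · constructor
    · rintro ⟨k, p, h0, hk, he⟩
      exact (main k p h0 hk he).1
    · rintro ⟨⟨i, b⟩, hmem, hσ⟩
      cases b with
      | true =>
        refine ⟨3, fun m => match m with
          | 0 => GV.sprev | 1 => GV.var i | 2 => GV.iT | _ => GV.snext,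
          rfl, rfl, ?_⟩
        intro j hj
        interval_cases j <;> simp [gadgetEdge] <;> first | exact ⟨i, hmem⟩ | exact hmem | exact hσ
      | false =>
        refine ⟨3, fun m => match m with
          | 0 => GV.sprev | 1 => GV.iF | 2 => GV.var i | _ => GV.snext,
          rfl, rfl, ?_⟩
        intro j hj
        interval_cases j <;> simp [gadgetEdge] <;> first | exact ⟨i, hmem⟩ | exact hmem | exact hσ
  · intro k p h0 hk he
    exact (main k p h0 hk he).2
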